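/- For every integer k ≥ 1, the exponential generating function of the Bernoulli–Stirling numbers of the second kind satisfies, as an identity of formal power series with rational coefficients, (Σ_{n≥0} B_{n,k} x^n/n!) · (exp(kx) - 1) = (1/k!) · (exp(x) - 1)^k · kx; equivalently Σ_{n≥0} B_{n,k} x^n/n! = ((exp(x)-1)^k/k!) · (kx/(exp(kx)-1)). -/

import Mathlib

/-- Stirling numbers of the second kind (partition Stirling numbers). -/
def stirling2 : ℕ → ℕ → ℕ
  | 0, 0 => 1
  | 0, _ + 1 => 0
  | _ + 1, 0 => 0
  | n + 1, k + 1 => (k + 1) * stirling2 n (k + 1) + stirling2 n k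

/-- Bernoulli–Stirling numbers of the second kind. -/
def bsB (n k : ℕ) : ℚ :=
  ∑ h ∈ Finset.range (n + 1),
    bernoulli h * (n.choose h) * stirling2 (n - h) k * (k : ℚ) ^ h

open PowerSeries

lemma ode_zero (c : ℚ) (h : PowerSeries ℚ) (hd : d⁄dX ℚ h = C (R := ℚ) c * h)
    (h0 : constantCoeff (R := ℚ) h = 0) : h = 0 := by
  have key : ∀ n, coeff (R := ℚ) n h = 0 := by
    intro n
    induction n with
    | zero => simpa using h0
    | succ n ih =>
      have := congrArg (coeff (R := ℚ) n) hd
      rw [coeff_derivative, coeff_C_mul, ih, mul_zero] at this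
      have hn : ((n : ℚ) + 1) ≠ 0 := by positivity
      exact (mul_eq_zero.mp this).resolve_right hn
  ext n
  simp [key n]

lemma my_deriv_exp : d⁄dX ℚ (exp ℚ) = exp ℚ := by
  ext n
  rw [coeff_derivative, coeff_exp, coeff_exp]
  simp only [Algebra.algebraMap_self, RingHom.id_apply]
  rw [Nat.factorial_succ]
  have h1 : ((n : ℚ) + 1) ≠ 0 := by positivity
  have h2 : ((n.factorial : ℚ)) ≠ 0 := Nat.cast_ne_zero.mpr n.factorial_ne_zero
  field_simp
  push_cast; ring

lemma stirlingEGF (k : ℕ) :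
    (PowerSeries.mk fun n => (stirling2 n k : ℚ) / n.factorial : PowerSeries ℚ) =
      C (R := ℚ) (1 / k.factorial) * (exp ℚ - 1) ^ k := by
  induction k with
  | zero =>
    ext n
    cases n with
    | zero => simp [stirling2]
    | succ n => simp [stirling2]
  | succ k ih =>
    set f : PowerSeries ℚ := PowerSeries.mk fun n => (stirling2 n (k + 1) : ℚ) / n.factorial
      with hf
    set g : PowerSeries ℚ := C (R := ℚ) (1 / (k + 1).factorial) * (exp ℚ - 1) ^ (k + 1) with hg
    have hdf : d⁄dX ℚ f = C (R := ℚ) ((k : ℚ) + 1) * f +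
        (PowerSeries.mk fun n => (stirling2 n k : ℚ) / n.factorial) := by
      ext n
      rw [coeff_derivative, map_add, coeff_C_mul, hf, coeff_mk, coeff_mk, coeff_mk]
      have hrec : stirling2 (n + 1) (k + 1) = (k + 1) * stirling2 n (k + 1) + stirling2 n k := rfl
      rw [hrec, Nat.factorial_succ]
      have h1 : ((n : ℚ) + 1) ≠ 0 := by positivity
      have h2 : ((n.factorial : ℚ)) ≠ 0 := Nat.cast_ne_zero.mpr n.factorial_ne_zero
      push_cast
      field_simp
    have hdexp1 : d⁄dX ℚ (exp ℚ - 1) = exp ℚ := by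
      rw [map_sub, my_deriv_exp, Derivation.map_one_eq_zero, sub_zero]
    have hdg : d⁄dX ℚ g = C (R := ℚ) ((k : ℚ) + 1) * g +
        C (R := ℚ) (1 / k.factorial) * (exp ℚ - 1) ^ k := by
      have hCmul : ∀ (a : ℚ) (p : PowerSeries ℚ), d⁄dX ℚ (C (R := ℚ) a * p) = C (R := ℚ) a * d⁄dX ℚ p := by
        intro a p
        rw [← smul_eq_C_mul, Derivation.map_smul, smul_eq_C_mul]
      have hpow : d⁄dX ℚ ((exp ℚ - 1) ^ (k + 1)) =
          (k + 1 : ℕ) • ((exp ℚ - 1) ^ k • exp ℚ) := by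
        rw [Derivation.leibniz_pow, Nat.add_sub_cancel, hdexp1]
      rw [hg, hCmul, hpow, nsmul_eq_mul, smul_eq_mul]
      have h1 : ((k + 1 : ℕ) : PowerSeries ℚ) = C (R := ℚ) ((k : ℚ) + 1) := by
        rw [← map_natCast (C (R := ℚ)) (k + 1)]; push_cast; ring_nf
      have h2 : C (R := ℚ) (1 / ((k + 1).factorial : ℚ)) * C (R := ℚ) ((k : ℚ) + 1) =
          C (R := ℚ) (1 / (k.factorial : ℚ)) := by
        rw [← map_mul]
        congr 1
        rw [Nat.factorial_succ]
        have h3 : ((k : ℚ) + 1) ≠ 0 := by positivity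
        have h4 : ((k.factorial : ℚ)) ≠ 0 := Nat.cast_ne_zero.mpr k.factorial_ne_zero
        push_cast
        field_simp
      rw [h1, pow_succ]
      linear_combination ((exp ℚ - 1) ^ k) * h2
    have hsub : f - g = 0 := by
      apply ode_zero ((k : ℚ) + 1)
      · rw [map_sub, hdf, hdg, ih]; ring
      · rw [map_sub, hf, hg]
        have : constantCoeff (R := ℚ) (exp ℚ - 1) = 0 := by simp [constantCoeff_exp]
        simp [stirling2, map_pow, this, zero_pow (Nat.succ_ne_zero k)]
    exact sub_eq_zero.mp hsub

lemma bsB_conv (k : ℕ) :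
    (PowerSeries.mk fun n => bsB n k / n.factorial : PowerSeries ℚ) =
      rescale (k : ℚ) (bernoulliPowerSeries ℚ) *
        (PowerSeries.mk fun n => (stirling2 n k : ℚ) / n.factorial) := by
  ext n
  rw [coeff_mk, coeff_mul, Finset.Nat.sum_antidiagonal_eq_sum_range_succ
    (fun a b => coeff (R := ℚ) a (rescale (k : ℚ) (bernoulliPowerSeries ℚ)) *
      coeff (R := ℚ) b (PowerSeries.mk fun m => (stirling2 m k : ℚ) / m.factorial))]
  rw [bsB, Finset.sum_div]
  apply Finset.sum_congr rfl
  intro h hh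
  have hhn : h ≤ n := Nat.lt_succ_iff.mp (Finset.mem_range.mp hh)
  rw [coeff_rescale, coeff_mk, bernoulliPowerSeries, coeff_mk]
  simp only [Algebra.algebraMap_self, RingHom.id_apply]
  rw [Nat.cast_choose ℚ hhn]
  have h1 : ((n.factorial : ℚ)) ≠ 0 := Nat.cast_ne_zero.mpr n.factorial_ne_zero
  have h2 : ((h.factorial : ℚ)) ≠ 0 := Nat.cast_ne_zero.mpr h.factorial_ne_zero
  have h3 : (((n - h).factorial : ℚ)) ≠ 0 := Nat.cast_ne_zero.mpr (n - h).factorial_ne_zero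
  field_simp

theorem bsB_exponential_generating_function (k : ℕ) (hk : 1 ≤ k) :
    (PowerSeries.mk fun n => bsB n k / n.factorial : PowerSeries ℚ) *
        (PowerSeries.rescale (k : ℚ) (PowerSeries.exp ℚ) - 1) =
      PowerSeries.C (R := ℚ) (1 / k.factorial) * (PowerSeries.exp ℚ - 1) ^ k *
        (PowerSeries.C (R := ℚ) (k : ℚ) * PowerSeries.X) := by
  have h1 : rescale (k : ℚ) (exp ℚ) - 1 = rescale (k : ℚ) (exp ℚ - 1) := by
    rw [map_sub, map_one]
  rw [bsB_conv, h1, stirlingEGF]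
  have h2 : rescale (k : ℚ) (bernoulliPowerSeries ℚ) * rescale (k : ℚ) (exp ℚ - 1) =
      rescale (k : ℚ) (bernoulliPowerSeries ℚ * (exp ℚ - 1)) := (map_mul _ _ _).symm
  calc rescale (k : ℚ) (bernoulliPowerSeries ℚ) * (C (R := ℚ) (1 / k.factorial) * (exp ℚ - 1) ^ k) *
        rescale (k : ℚ) (exp ℚ - 1)
      = rescale (k : ℚ) (bernoulliPowerSeries ℚ * (exp ℚ - 1)) *
        (C (R := ℚ) (1 / k.factorial) * (exp ℚ - 1) ^ k) := by rw [← h2]; ring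
    _ = rescale (k : ℚ) X * (C (R := ℚ) (1 / k.factorial) * (exp ℚ - 1) ^ k) := by
        rw [bernoulliPowerSeries_mul_exp_sub_one]
    _ = C (R := ℚ) (1 / k.factorial) * (exp ℚ - 1) ^ k * (C (R := ℚ) (k : ℚ) * X) := by
        rw [rescale_X]; ring
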